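/- arXiv:1209.1220 — 2 statements merged into one kernel-verified Lean document; each statement's English description precedes it below -/
import Mathlib

section
/- Let d ≥ 2 be even, S = {x ∈ F_q^d : a_1x_1² + ⋯ + a_dx_d² = 0}, and dσ the normalized surface measure on S, so (dσ)^∨(m) = |S|^{-1} Σ_{x∈S} χ(m·x). Then: (i) if m ≠ 0 and m_1²/a_1 + ⋯ + m_d²/a_d = 0, then (dσ)^∨(m) = (G_1^d/|S|)(1 - q^{-1}) η(a_1⋯a_d); (ii) if m_1²/a_1 + ⋯ + m_d²/a_d ≠ 0, then (dσ)^∨(m) = -(G_1^d/(q|S|)) η(a_1⋯a_d). -/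
open Finset

def quadSurf {F : Type} [Field F] [Fintype F] [DecidableEq F] {d : ℕ}
    (a : Fin d → F) : Finset (Fin d → F) :=
  Finset.univ.filter (fun x => ∑ i, a i * x i ^ 2 = 0)

def dualSurf {F : Type} [Field F] [Fintype F] [DecidableEq F] {d : ℕ}
    (a : Fin d → F) : Finset (Fin d → F) :=
  Finset.univ.filter (fun m => ∑ i, m i ^ 2 * (a i)⁻¹ = 0)

noncomputable def gSum {F : Type} [Field F] [Fintype F] [DecidableEq F]
    (χ : AddChar F ℂ) : ℂ :=
  ∑ s ∈ Finset.univ.erase (0 : F), ((quadraticChar F s : ℤ) : ℂ) * χ s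

noncomputable def sigmaInv {F : Type} [Field F] [Fintype F] [DecidableEq F]
    (χ : AddChar F ℂ) {d : ℕ} (a : Fin d → F) (m : Fin d → F) : ℂ :=
  ((quadSurf a).card : ℂ)⁻¹ * ∑ x ∈ quadSurf a, χ (∑ i, m i * x i)

noncomputable def brKernel {F : Type} [Field F] [Fintype F] [DecidableEq F]
    (χ : AddChar F ℂ) {d : ℕ} (a : Fin d → F) (m : Fin d → F) : ℂ :=
  if m = 0 then 0 else sigmaInv χ a m

noncomputable def brKernelHat {F : Type} [Field F] [Fintype F] [DecidableEq F]
    (χ : AddChar F ℂ) {d : ℕ} (a : Fin d → F) (x : Fin d → F) : ℂ :=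
  ∑ m : Fin d → F, brKernel χ a m * χ (-(∑ i, m i * x i))

noncomputable def convInd {F : Type} [Field F] [Fintype F] [DecidableEq F]
    (χ : AddChar F ℂ) {d : ℕ} (a : Fin d → F) (E : Finset (Fin d → F))
    (x : Fin d → F) : ℂ :=
  ((Fintype.card F : ℂ) ^ d)⁻¹ *
    ∑ y : Fin d → F, (if x - y ∈ E then brKernelHat χ a y else 0)

noncomputable def convSig {F : Type} [Field F] [Fintype F] [DecidableEq F]
    {d : ℕ} (a : Fin d → F) (f : (Fin d → F) → ℂ) (x : Fin d → F) : ℂ :=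
  ((quadSurf a).card : ℂ)⁻¹ * ∑ y ∈ quadSurf a, f (x - y)

noncomputable def Lnorm {α : Type} [Fintype α] (r : ℝ) (g : α → ℂ) : ℝ :=
  ((Fintype.card α : ℝ)⁻¹ * ∑ x : α, ‖g x‖ ^ r) ^ (1 / r)

section aux
variable {F : Type} [Field F] [Fintype F] [DecidableEq F]

lemma addChar_map_sum (χ : AddChar F ℂ) {ι : Type*} (s : Finset ι) (f : ι → F) :
    χ (∑ i ∈ s, f i) = ∏ i ∈ s, χ (f i) := by
  induction s using Finset.cons_induction with
  | empty => simp
  | cons i s hi ih => rw [Finset.sum_cons, Finset.prod_cons, AddChar.map_add_eq_mul, ih]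

lemma sum_chi_mul (χ : AddChar F ℂ) (hχ : χ ≠ 1) (b : F) :
    ∑ x : F, χ (x * b) = if b = 0 then (Fintype.card F : ℂ) else 0 := by
  have := AddChar.sum_mulShift b (AddChar.IsPrimitive.of_ne_one hχ)
  split_ifs with h <;> simp_all

end aux
section aux2
variable {F : Type} [Field F] [Fintype F] [DecidableEq F]

set_option linter.unusedSectionVars false

lemma sum_chi_sq (χ : AddChar F ℂ) (hχ : χ ≠ 1) (hF : ringChar F ≠ 2) {c : F} (hc : c ≠ 0) :
    ∑ x : F, χ (c * x ^ 2) = ((quadraticChar F c : ℤ) : ℂ) * gSum χ := by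
  have h1 : ∑ x : F, χ (c * x ^ 2)
      = ∑ b : F, ((#{x ∈ univ | (x:F) ^ 2 = b} : ℕ) : ℂ) * χ (c * b) := by
    rw [← Finset.sum_fiberwise' univ (fun x : F => x ^ 2) (fun b => χ (c * b))]
    simp [Finset.sum_const, nsmul_eq_mul]
  have h2 : ∀ b : F, ((#{x ∈ univ | (x:F) ^ 2 = b} : ℕ) : ℂ)
      = ((quadraticChar F b : ℤ) : ℂ) + 1 := by
    intro b
    have := quadraticChar_card_sqrts hF b
    rw [Set.toFinset_setOf] at this
    exact_mod_cast congrArg (fun n : ℤ => (n : ℂ)) this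
  rw [h1]
  simp_rw [h2, add_mul, one_mul, Finset.sum_add_distrib]
  have h3 : ∑ b : F, χ (c * b) = 0 := by
    simp_rw [mul_comm c]
    rw [sum_chi_mul χ hχ c, if_neg hc]
  rw [h3, add_zero]
  -- remove b = 0 term
  rw [← Finset.add_sum_erase _ _ (Finset.mem_univ (0:F))]
  simp only [quadraticChar_zero, Int.cast_zero, Complex.ofReal_zero, zero_mul, zero_add]
  -- reindex b ↦ c * b
  rw [gSum, Finset.mul_sum]
  refine Finset.sum_nbij' (fun b => c * b) (fun s => c⁻¹ * s) ?_ ?_ ?_ ?_ ?_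
  · intro b hb
    simp only [Finset.mem_erase, Finset.mem_univ, and_true] at hb ⊢
    exact mul_ne_zero hc hb
  · intro s hs
    simp only [Finset.mem_erase, Finset.mem_univ, and_true] at hs ⊢
    exact mul_ne_zero (inv_ne_zero hc) hs
  · intro b hb; field_simp
  · intro s hs; field_simp
  · intro b hb
    simp only [Finset.mem_erase, Finset.mem_univ, and_true] at hb
    have hsq : ((quadraticChar F c : ℤ) : ℂ) * ((quadraticChar F (c * b) : ℤ) : ℂ)
        = ((quadraticChar F b : ℤ) : ℂ) := by
      rw [map_mul]
      push_cast
      have h4 : ((quadraticChar F c : ℤ) : ℂ) ^ 2 = 1 := by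
        rw [← Int.cast_pow, quadraticChar_sq_one hc]; simp
      rw [← mul_assoc, ← sq, h4, one_mul]
    rw [← hsq]; ring

end aux2

section aux3
variable {F : Type} [Field F] [Fintype F] [DecidableEq F]
set_option linter.unusedSectionVars false

lemma sum_chi_quad (χ : AddChar F ℂ) (hχ : χ ≠ 1) (hF : ringChar F ≠ 2)
    {c : F} (hc : c ≠ 0) (b : F) :
    ∑ x : F, χ (c * x ^ 2 + b * x)
      = ((quadraticChar F c : ℤ) : ℂ) * gSum χ * χ (-(b ^ 2) * (4 * c)⁻¹) := by
  have h2 : (2 : F) ≠ 0 := Ring.two_ne_zero hF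
  have h4 : (4 : F) ≠ 0 := by
    have : (4 : F) = 2 * 2 := by norm_num
    rw [this]; exact mul_ne_zero h2 h2
  have key : ∀ y : F, c * (y - b * (2 * c)⁻¹) ^ 2 + b * (y - b * (2 * c)⁻¹)
      = c * y ^ 2 + -(b ^ 2) * (4 * c)⁻¹ := by
    intro y
    field_simp
    ring
  have hsub : ∑ x : F, χ (c * x ^ 2 + b * x)
      = ∑ y : F, χ (c * (y - b * (2 * c)⁻¹) ^ 2 + b * (y - b * (2 * c)⁻¹)) :=
    (Fintype.sum_equiv (Equiv.subRight (b * (2 * c)⁻¹)) _ _ (fun y => rfl)).symm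
  rw [hsub]
  simp_rw [key, AddChar.map_add_eq_mul, ← Finset.sum_mul]
  rw [sum_chi_sq χ hχ hF hc]

end aux3

section aux4
variable {F : Type} [Field F] [Fintype F] [DecidableEq F]
set_option linter.unusedSectionVars false

lemma key_sum (χ : AddChar F ℂ) (hχ : χ ≠ 1) (hF : ringChar F ≠ 2)
    {d : ℕ} (hdeven : Even d) (a : Fin d → F) (ha : ∀ i, a i ≠ 0)
    (m : Fin d → F) (hm : m ≠ 0) :
    (Fintype.card F : ℂ) * ∑ x ∈ quadSurf a, χ (∑ i, m i * x i)
      = ((quadraticChar F (∏ i, a i) : ℤ) : ℂ) * gSum χ ^ d *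
        (if (∑ i, m i ^ 2 * (a i)⁻¹) = 0 then (Fintype.card F : ℂ) - 1 else -1) := by
  have h2 : (2 : F) ≠ 0 := Ring.two_ne_zero hF
  have h4 : (4 : F) ≠ 0 := by
    have : (4 : F) = 2 * 2 := by norm_num
    rw [this]; exact mul_ne_zero h2 h2
  set M : F := ∑ i, m i ^ 2 * (a i)⁻¹ with hM
  set G : ℂ := gSum χ with hG
  set η : F → ℂ := fun s => ((quadraticChar F s : ℤ) : ℂ) with hη
  -- Step 1: indicator
  have step1 : (Fintype.card F : ℂ) * ∑ x ∈ quadSurf a, χ (∑ i, m i * x i)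
      = ∑ x : Fin d → F,
          (if (∑ i, a i * x i ^ 2) = 0 then (Fintype.card F : ℂ) else 0)
            * χ (∑ i, m i * x i) := by
    rw [quadSurf, Finset.sum_filter, Finset.mul_sum]
    refine Finset.sum_congr rfl fun x _ => ?_
    split_ifs <;> simp
  -- Step 2: indicator as character sum, swap
  have step2 : ∑ x : Fin d → F,
        (if (∑ i, a i * x i ^ 2) = 0 then (Fintype.card F : ℂ) else 0)
          * χ (∑ i, m i * x i)
      = ∑ t : F, ∏ i, ∑ u : F, χ (t * a i * u ^ 2 + m i * u) := by
    have harg : ∀ (t : F) (x : Fin d → F),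
        t * (∑ i, a i * x i ^ 2) + ∑ i, m i * x i
          = ∑ i, (t * a i * x i ^ 2 + m i * x i) := by
      intro t x
      rw [Finset.mul_sum, ← Finset.sum_add_distrib]
      exact Finset.sum_congr rfl fun i _ => by ring
    calc
      ∑ x : Fin d → F, (if (∑ i, a i * x i ^ 2) = 0 then (Fintype.card F : ℂ) else 0)
            * χ (∑ i, m i * x i)
          = ∑ x : Fin d → F, (∑ t : F, χ (t * (∑ i, a i * x i ^ 2))) * χ (∑ i, m i * x i) := by
            refine Finset.sum_congr rfl fun x _ => ?_
            congr 1
            exact (sum_chi_mul χ hχ (∑ i, a i * x i ^ 2)).symm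
      _ = ∑ t : F, ∑ x : Fin d → F, χ (t * (∑ i, a i * x i ^ 2) + ∑ i, m i * x i) := by
            simp_rw [Finset.sum_mul, AddChar.map_add_eq_mul]
            exact Finset.sum_comm
      _ = ∑ t : F, ∑ x : Fin d → F, ∏ i, χ (t * a i * x i ^ 2 + m i * x i) := by
            refine Finset.sum_congr rfl fun t _ => Finset.sum_congr rfl fun x _ => ?_
            rw [harg, addChar_map_sum]
      _ = ∑ t : F, ∏ i, ∑ u : F, χ (t * a i * u ^ 2 + m i * u) := by
            refine Finset.sum_congr rfl fun t _ => ?_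
            exact (Fintype.prod_sum fun i u => χ (t * a i * u ^ 2 + m i * u)).symm
  -- t = 0 term vanishes
  have hzero : (∏ i, ∑ u : F, χ ((0:F) * a i * u ^ 2 + m i * u)) = 0 := by
    obtain ⟨i0, hi0⟩ := Function.ne_iff.mp hm
    have hi0' : m i0 ≠ 0 := by simpa using hi0
    refine Finset.prod_eq_zero (Finset.mem_univ i0) ?_
    have : ∀ u : F, (0:F) * a i0 * u ^ 2 + m i0 * u = u * m i0 := by intro u; ring
    rw [show (∑ u : F, χ ((0:F) * a i0 * u ^ 2 + m i0 * u)) = ∑ u : F, χ (u * m i0) from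
      Finset.sum_congr rfl fun u _ => by rw [this u]]
    rw [sum_chi_mul χ hχ (m i0), if_neg hi0']
  -- t ≠ 0 terms
  have hterm : ∀ t : F, t ≠ 0 →
      (∏ i, ∑ u : F, χ (t * a i * u ^ 2 + m i * u))
        = η (∏ i, a i) * G ^ d * χ (-(4 * t)⁻¹ * M) := by
    intro t ht
    have hta : ∀ i, t * a i ≠ 0 := fun i => mul_ne_zero ht (ha i)
    have hprod1 : (∏ i, ∑ u : F, χ (t * a i * u ^ 2 + m i * u))
        = ∏ i, (η (t * a i) * G * χ (-(m i ^ 2) * (4 * (t * a i))⁻¹)) := by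
      refine Finset.prod_congr rfl fun i _ => ?_
      exact sum_chi_quad χ hχ hF (hta i) (m i)
    rw [hprod1]
    rw [Finset.prod_mul_distrib, Finset.prod_mul_distrib]
    have hGpow : (∏ _i : Fin d, G) = G ^ d := by
      rw [Finset.prod_const, Finset.card_univ, Fintype.card_fin]
    have hetaprod : (∏ i, η (t * a i)) = η (∏ i, a i) := by
      have hZ : (∏ i, quadraticChar F (t * a i))
          = quadraticChar F t ^ d * quadraticChar F (∏ i, a i) := by
        rw [← map_prod, Finset.prod_mul_distrib, Finset.prod_const, Finset.card_univ,
          Fintype.card_fin, map_mul, map_pow]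
      have hpow : quadraticChar F t ^ d = 1 := by
        obtain ⟨k, hk⟩ := hdeven
        rw [hk, pow_add, ← mul_pow, ← sq, quadraticChar_sq_one ht, one_pow]
      rw [hη]
      push_cast [← hZ]
      rw [← Int.cast_prod]
      congr 1
      rw [hZ, hpow, one_mul]
    have hchiprod : (∏ i, χ (-(m i ^ 2) * (4 * (t * a i))⁻¹)) = χ (-(4 * t)⁻¹ * M) := by
      rw [← addChar_map_sum]
      congr 1
      have : ∀ i, -(m i ^ 2) * (4 * (t * a i))⁻¹ = -(4 * t)⁻¹ * (m i ^ 2 * (a i)⁻¹) := by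
        intro i
        field_simp
      simp_rw [hM, this, ← Finset.mul_sum]
    rw [hGpow, hetaprod, hchiprod]
  -- sum over nonzero t
  have hT : (∑ t ∈ Finset.univ.erase (0:F), χ (-(4 * t)⁻¹ * M))
      = if M = 0 then (Fintype.card F : ℂ) - 1 else -1 := by
    by_cases hM0 : M = 0
    · rw [if_pos hM0]
      have : ∀ t : F, -(4 * t)⁻¹ * M = 0 := by intro t; rw [hM0, mul_zero]
      simp_rw [this, AddChar.map_zero_eq_one]
      rw [Finset.sum_const, Finset.card_erase_of_mem (Finset.mem_univ _), Finset.card_univ]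
      have hq1 : 1 ≤ Fintype.card F := Fintype.card_pos
      rw [nsmul_eq_mul, mul_one, Nat.cast_sub hq1, Nat.cast_one]
    · rw [if_neg hM0]
      have hbij : (∑ t ∈ Finset.univ.erase (0:F), χ (-(4 * t)⁻¹ * M))
          = ∑ s ∈ Finset.univ.erase (0:F), χ s := by
        refine Finset.sum_nbij' (fun t => -(4 * t)⁻¹ * M) (fun s => -(4 * s)⁻¹ * M) ?_ ?_ ?_ ?_ ?_
        · intro t htt
          simp only [Finset.mem_erase, Finset.mem_univ, and_true] at htt ⊢
          exact mul_ne_zero (neg_ne_zero.mpr (inv_ne_zero (mul_ne_zero h4 htt))) hM0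
        · intro s hs
          simp only [Finset.mem_erase, Finset.mem_univ, and_true] at hs ⊢
          exact mul_ne_zero (neg_ne_zero.mpr (inv_ne_zero (mul_ne_zero h4 hs))) hM0
        · intro t htt
          simp only [Finset.mem_erase, Finset.mem_univ, and_true] at htt
          field_simp
        · intro s hs
          simp only [Finset.mem_erase, Finset.mem_univ, and_true] at hs
          field_simp
        · intro t _; rfl
      rw [hbij, Finset.sum_erase_eq_sub (Finset.mem_univ (0:F)),
        AddChar.sum_eq_zero_of_ne_one hχ, AddChar.map_zero_eq_one]
      ring
  -- assemble
  rw [step1, step2, ← Finset.add_sum_erase _ _ (Finset.mem_univ (0:F)), hzero, zero_add]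
  rw [Finset.sum_congr rfl (fun t htt => hterm t (Finset.ne_of_mem_erase htt))]
  rw [← Finset.mul_sum, hT]

end aux4

/-- Explicit values of (dσ)^∨(m) for the diagonal quadratic surface, d even:
(i) if m ≠ 0 lies on the dual surface, (dσ)^∨(m) = (G₁^d/|S|)(1-q⁻¹)η(a₁⋯a_d);
(ii) if m is off the dual surface, (dσ)^∨(m) = -(G₁^d/(q|S|))η(a₁⋯a_d). -/
theorem sigmaInv_eval
    (F : Type) [Field F] [Fintype F] [DecidableEq F]
    (hq : Odd (Fintype.card F))
    (χ : AddChar F ℂ) (hχ : χ ≠ 1)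
    (d : ℕ) (hd2 : 2 ≤ d) (hdeven : Even d)
    (a : Fin d → F) (ha : ∀ i, a i ≠ 0) (m : Fin d → F) :
    (m ≠ 0 → (∑ i, m i ^ 2 * (a i)⁻¹) = 0 →
      sigmaInv χ a m
        = gSum χ ^ d / ((quadSurf a).card : ℂ) * (1 - (Fintype.card F : ℂ)⁻¹)
            * ((quadraticChar F (∏ i, a i) : ℤ) : ℂ)) ∧
    ((∑ i, m i ^ 2 * (a i)⁻¹) ≠ 0 →
      sigmaInv χ a m
        = -(gSum χ ^ d) / ((Fintype.card F : ℂ) * ((quadSurf a).card : ℂ))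
            * ((quadraticChar F (∏ i, a i) : ℤ) : ℂ)) := by
  have hF : ringChar F ≠ 2 := by
    intro h
    have h1 := (FiniteField.even_card_iff_char_two (F := F)).mp h
    have h2 := Nat.odd_iff.mp hq
    omega
  have hq0 : (Fintype.card F : ℂ) ≠ 0 := Nat.cast_ne_zero.mpr Fintype.card_ne_zero
  constructor
  · intro hm hM
    have key := key_sum χ hχ hF hdeven a ha m hm
    rw [if_pos hM] at key
    have hSig : (∑ x ∈ quadSurf a, χ (∑ i, m i * x i))
        = (Fintype.card F : ℂ)⁻¹ * (((quadraticChar F (∏ i, a i) : ℤ) : ℂ) * gSum χ ^ d *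
            ((Fintype.card F : ℂ) - 1)) := by
      rw [← key, inv_mul_cancel_left₀ hq0]
    simp only [sigmaInv]
    rw [hSig, div_eq_mul_inv]
    have hq1 : (Fintype.card F : ℂ)⁻¹ * ((Fintype.card F : ℂ) - 1)
        = 1 - (Fintype.card F : ℂ)⁻¹ := by
      field_simp
    linear_combination (((quadSurf a).card : ℂ)⁻¹ *
      ((quadraticChar F (∏ i, a i) : ℤ) : ℂ) * gSum χ ^ d) * hq1
  · intro hM
    have hm : m ≠ 0 := by
      intro h
      apply hM
      simp [h]
    have key := key_sum χ hχ hF hdeven a ha m hm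
    rw [if_neg hM] at key
    have hSig : (∑ x ∈ quadSurf a, χ (∑ i, m i * x i))
        = (Fintype.card F : ℂ)⁻¹ * (((quadraticChar F (∏ i, a i) : ℤ) : ℂ) * gSum χ ^ d *
            (-1)) := by
      rw [← key, inv_mul_cancel_left₀ hq0]
    simp only [sigmaInv]
    rw [hSig, div_eq_mul_inv, mul_inv]
    ring
end

section
/- Let d ≥ 4 be even and S = {x ∈ F_q^d : a_1x_1² + ⋯ + a_dx_d² = 0} with all a_j nonzero. Then for every m ∈ F_q^d with m ≠ 0, one has |Σ_{x∈S} χ(m·x)| ≤ C q^{d/2} for some absolute constant C; equivalently, |(dσ)^∨(m)| ≲ q^{-(d-2)/2}. -/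
set_option linter.unusedSectionVars false
set_option maxHeartbeats 1000000

open Finset

section Helpers

variable {F : Type} [Field F] [Fintype F] [DecidableEq F]

lemma charPos : 0 < ringChar F := (CharP.char_is_prime F (ringChar F)).pos

lemma conj_char (χ : AddChar F ℂ) (x : F) :
    (starRingEnd ℂ) (χ x) = χ (-x) := by
  rw [AddChar.starComp_apply charPos, AddChar.inv_apply]

lemma abs_char (χ : AddChar F ℂ) (x : F) : ‖χ x‖ = 1 := by
  have h : ((Complex.normSq (χ x) : ℂ)) = 1 := by
    rw [← Complex.mul_conj, conj_char, ← AddChar.map_add_eq_mul, add_neg_cancel,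
      AddChar.map_zero_eq_one]
  have h' : Complex.normSq (χ x) = 1 := by exact_mod_cast h
  rw [Complex.norm_def, h', Real.sqrt_one]

lemma two_ne_zero_of_odd_card (hq : Odd (Fintype.card F)) : (2 : F) ≠ 0 := by
  intro h2
  have hd : ringChar F ∣ 2 := (CharP.cast_eq_zero_iff F (ringChar F) 2).mp (by exact_mod_cast h2)
  have hp : (ringChar F).Prime := CharP.char_is_prime F (ringChar F)
  have : ringChar F = 2 := (Nat.prime_dvd_prime_iff_eq hp Nat.prime_two).mp hd
  have h := FiniteField.even_card_iff_char_two.mp this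
  rw [Nat.odd_iff] at hq
  omega

lemma char_map_sum (χ : AddChar F ℂ) {ι : Type} (s : Finset ι) (f : ι → F) :
    χ (∑ i ∈ s, f i) = ∏ i ∈ s, χ (f i) := by
  induction s using Finset.cons_induction with
  | empty => simp
  | cons i s hi ih => rw [Finset.sum_cons, Finset.prod_cons, AddChar.map_add_eq_mul, ih]

lemma gauss_mul_conj (hq : Odd (Fintype.card F)) {χ : AddChar F ℂ} (hχ : χ ≠ 1)
    {A : F} (hA : A ≠ 0) :
    (∑ t : F, χ (A * t ^ 2)) * (starRingEnd ℂ) (∑ t : F, χ (A * t ^ 2)) =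
      (Fintype.card F : ℂ) := by
  have h2 := two_ne_zero_of_odd_card hq
  have hprim : χ.IsPrimitive := AddChar.IsPrimitive.of_ne_one hχ
  rw [map_sum]
  have step1 : (∑ t : F, χ (A * t ^ 2)) * ∑ v : F, (starRingEnd ℂ) (χ (A * v ^ 2))
      = ∑ v : F, ∑ w : F, χ (A * w ^ 2) * χ (v * (2 * A * w)) := by
    rw [mul_comm, Finset.sum_mul_sum]
    refine Finset.sum_congr rfl fun v _ => ?_
    rw [← Equiv.sum_comp (Equiv.addLeft v)]
    refine Finset.sum_congr rfl fun w _ => ?_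
    rw [conj_char, mul_comm, ← AddChar.map_add_eq_mul, ← AddChar.map_add_eq_mul]
    congr 1
    simp only [Equiv.coe_addLeft]
    ring
  rw [step1, Finset.sum_comm]
  have step2 : ∀ w : F, ∑ v : F, χ (A * w ^ 2) * χ (v * (2 * A * w))
      = χ (A * w ^ 2) * (if 2 * A * w = 0 then (Fintype.card F : ℂ) else 0) := by
    intro w
    rw [← Finset.mul_sum, AddChar.sum_mulShift _ hprim]
    congr 1
    split_ifs <;> simp
  simp_rw [step2]
  rw [Finset.sum_eq_single_of_mem 0 (Finset.mem_univ 0)]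
  · simp
  · intro w _ hw
    rw [if_neg (by exact mul_ne_zero (mul_ne_zero h2 hA) hw), mul_zero]

lemma abs_sq_gausslin (hq : Odd (Fintype.card F)) {χ : AddChar F ℂ} (hχ : χ ≠ 1)
    {A : F} (hA : A ≠ 0) (B : F) :
    ‖∑ t : F, χ (A * t ^ 2 + B * t)‖ ^ 2 = Fintype.card F := by
  have h2 := two_ne_zero_of_odd_card hq
  have h4 : (4 : F) ≠ 0 := by
    have : (4 : F) = 2 * 2 := by norm_num
    rw [this]; exact mul_ne_zero h2 h2
  have hsub : ∑ t : F, χ (A * t ^ 2 + B * t)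
      = χ (-(B ^ 2 / (4 * A))) * ∑ u : F, χ (A * u ^ 2) := by
    rw [Finset.mul_sum, ← Equiv.sum_comp (Equiv.addRight (-(B / (2 * A))))]
    refine Finset.sum_congr rfl fun u _ => ?_
    rw [← AddChar.map_add_eq_mul]
    congr 1
    simp only [Equiv.coe_addRight]
    field_simp
    ring
  rw [hsub, norm_mul, abs_char, one_mul, Complex.sq_norm]
  have h := gauss_mul_conj hq hχ hA
  rw [Complex.mul_conj] at h
  exact_mod_cast h

variable {d : ℕ}

lemma P_factor (χ : AddChar F ℂ) (a m : Fin d → F) (s : F) :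
    ∑ x : Fin d → F, χ (s * (∑ i, a i * x i ^ 2) + ∑ i, m i * x i)
      = ∏ i, ∑ t : F, χ (s * a i * t ^ 2 + m i * t) := by
  rw [Finset.prod_univ_sum, Fintype.piFinset_univ]
  refine Finset.sum_congr rfl fun x _ => ?_
  rw [← char_map_sum]
  congr 1
  rw [Finset.mul_sum, ← Finset.sum_add_distrib]
  refine Finset.sum_congr rfl fun i _ => ?_
  ring

lemma abs_P (hq : Odd (Fintype.card F)) {χ : AddChar F ℂ} (hχ : χ ≠ 1)
    (hd2 : Even d) {a : Fin d → F} (ha : ∀ i, a i ≠ 0)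
    (m : Fin d → F) {s : F} (hs : s ≠ 0) :
    ‖∑ x : Fin d → F, χ (s * (∑ i, a i * x i ^ 2) + ∑ i, m i * x i)‖
      = (Fintype.card F : ℝ) ^ (d / 2) := by
  rw [P_factor, norm_prod]
  have h : (∏ i, ‖∑ t : F, χ (s * a i * t ^ 2 + m i * t)‖) ^ 2
      = (Fintype.card F : ℝ) ^ d := by
    rw [← Finset.prod_pow,
      Finset.prod_congr rfl (fun i _ => abs_sq_gausslin hq hχ (mul_ne_zero hs (ha i)) (m i))]
    simp
  have h1 : (0 : ℝ) ≤ ∏ i, ‖∑ t : F, χ (s * a i * t ^ 2 + m i * t)‖ :=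
    Finset.prod_nonneg fun i _ => norm_nonneg _
  have h2 : ((Fintype.card F : ℝ) ^ (d / 2)) ^ 2 = (Fintype.card F : ℝ) ^ d := by
    rw [← pow_mul]
    congr 1
    obtain ⟨k, hk⟩ := hd2
    omega
  have h3 : (0 : ℝ) ≤ (Fintype.card F : ℝ) ^ (d / 2) := by positivity
  exact (pow_left_inj₀ h1 h3 two_ne_zero).mp (h.trans h2.symm)

lemma decomp {χ : AddChar F ℂ} (hχ : χ ≠ 1) (a m : Fin d → F) :
    (Fintype.card F : ℂ) * ∑ x ∈ quadSurf a, χ (∑ i, m i * x i)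
      = ∑ s : F, ∑ x : Fin d → F, χ (s * (∑ i, a i * x i ^ 2) + ∑ i, m i * x i) := by
  have hprim : χ.IsPrimitive := AddChar.IsPrimitive.of_ne_one hχ
  rw [Finset.sum_comm]
  have key : ∀ x : Fin d → F, ∑ s : F, χ (s * (∑ i, a i * x i ^ 2) + ∑ i, m i * x i)
      = (if (∑ i, a i * x i ^ 2) = 0 then (Fintype.card F : ℂ) else 0)
          * χ (∑ i, m i * x i) := by
    intro x
    simp_rw [AddChar.map_add_eq_mul]
    rw [← Finset.sum_mul, AddChar.sum_mulShift _ hprim]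
    congr 1
    split_ifs <;> simp
  simp_rw [key]
  rw [quadSurf, Finset.sum_filter, Finset.mul_sum]
  refine Finset.sum_congr rfl fun x _ => ?_
  split_ifs <;> ring

end Helpers

/-- For d ≥ 4 even, the exponential sum over S satisfies
|∑_{x∈S} χ(m·x)| ≤ C q^{d/2} for all m ≠ 0, with C absolute; equivalently
|(dσ)^∨(m)| ≲ q^{-(d-2)/2}. -/
theorem expSum_quadSurf_decay :
    ∃ C : ℝ, 0 < C ∧
      ∀ (F : Type) [Field F] [Fintype F] [DecidableEq F],
        Odd (Fintype.card F) →
        ∀ (χ : AddChar F ℂ), χ ≠ 1 →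
        ∀ (d : ℕ), 4 ≤ d → Even d →
        ∀ (a : Fin d → F), (∀ i, a i ≠ 0) →
        ∀ (m : Fin d → F), m ≠ 0 →
          ‖∑ x ∈ quadSurf a, χ (∑ i, m i * x i)‖
              ≤ C * (Fintype.card F : ℝ) ^ (d / 2) ∧
          ‖sigmaInv χ a m‖
              ≤ C * (Fintype.card F : ℝ) ^ (-(((d : ℝ) - 2) / 2)) := by
  refine ⟨2, by norm_num, ?_⟩
  intro F _ _ _ hq χ hχ d hd4 hd2 a ha m hm
  set q : ℕ := Fintype.card F with hqdef
  have hq1 : 1 < q := Fintype.one_lt_card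
  have hq3 : 3 ≤ q := by
    rcases hq with ⟨j, hj⟩
    omega
  have hq0 : (0 : ℝ) < (q : ℝ) := by positivity
  set P : F → ℂ := fun s => ∑ x : Fin d → F, χ (s * (∑ i, a i * x i ^ 2) + ∑ i, m i * x i)
    with hP
  set P0 : F → ℂ := fun s => ∑ x : Fin d → F, χ (s * (∑ i, a i * x i ^ 2) + ∑ i, (0 : F) * x i)
    with hP0
  -- bound on sums over s ≠ 0
  have habsP : ∀ (m' : Fin d → F),
      ‖∑ s ∈ Finset.univ.erase (0 : F),
        ∑ x : Fin d → F, χ (s * (∑ i, a i * x i ^ 2) + ∑ i, m' i * x i)‖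
      ≤ ((q : ℝ) - 1) * (q : ℝ) ^ (d / 2) := by
    intro m'
    calc ‖∑ s ∈ Finset.univ.erase (0 : F),
        ∑ x : Fin d → F, χ (s * (∑ i, a i * x i ^ 2) + ∑ i, m' i * x i)‖
        ≤ ∑ s ∈ Finset.univ.erase (0 : F),
            ‖∑ x : Fin d → F, χ (s * (∑ i, a i * x i ^ 2) + ∑ i, m' i * x i)‖ :=
          norm_sum_le _ _
      _ = ∑ s ∈ Finset.univ.erase (0 : F), (q : ℝ) ^ (d / 2) := by
          refine Finset.sum_congr rfl fun s hs => ?_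
          exact abs_P hq hχ hd2 ha m' (Finset.mem_erase.mp hs).1
      _ = ((q : ℝ) - 1) * (q : ℝ) ^ (d / 2) := by
          rw [Finset.sum_const, Finset.card_erase_of_mem (Finset.mem_univ 0), Finset.card_univ, ← hqdef]
          rw [nsmul_eq_mul]
          congr 1
          rw [Nat.cast_sub (by omega)]
          norm_num
  -- main sum bound
  have hsplit : ∀ (m' : Fin d → F),
      (q : ℂ) * ∑ x ∈ quadSurf a, χ (∑ i, m' i * x i)
        = (∑ x : Fin d → F, χ ((0:F) * (∑ i, a i * x i ^ 2) + ∑ i, m' i * x i))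
          + ∑ s ∈ Finset.univ.erase (0 : F),
              ∑ x : Fin d → F, χ (s * (∑ i, a i * x i ^ 2) + ∑ i, m' i * x i) := by
    intro m'
    rw [decomp hχ a m', ← Finset.add_sum_erase _ _ (Finset.mem_univ (0 : F))]
  -- the s = 0 term vanishes for m ≠ 0
  have hzero : (∑ x : Fin d → F, χ ((0:F) * (∑ i, a i * x i ^ 2) + ∑ i, m i * x i)) = 0 := by
    rw [P_factor]
    obtain ⟨i, hi⟩ := Function.ne_iff.mp hm
    refine Finset.prod_eq_zero (Finset.mem_univ i) ?_
    have : ∀ t : F, (0 : F) * a i * t ^ 2 + m i * t = t * m i := by intro t; ring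
    simp_rw [this]
    simp only [Pi.zero_apply] at hi
    rw [AddChar.sum_mulShift _ (AddChar.IsPrimitive.of_ne_one hχ), if_neg hi]
    simp
  have hmain : ‖∑ x ∈ quadSurf a, χ (∑ i, m i * x i)‖ ≤ (q : ℝ) ^ (d / 2) := by
    have h1 : (q : ℝ) * ‖∑ x ∈ quadSurf a, χ (∑ i, m i * x i)‖
        ≤ ((q : ℝ) - 1) * (q : ℝ) ^ (d / 2) := by
      have := hsplit m
      rw [hzero, zero_add] at this
      calc (q : ℝ) * ‖∑ x ∈ quadSurf a, χ (∑ i, m i * x i)‖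
          = ‖(q : ℂ) * ∑ x ∈ quadSurf a, χ (∑ i, m i * x i)‖ := by
            rw [norm_mul, Complex.norm_natCast]
        _ ≤ ((q : ℝ) - 1) * (q : ℝ) ^ (d / 2) := by rw [this]; exact habsP m
    nlinarith [norm_nonneg (∑ x ∈ quadSurf a, χ (∑ i, m i * x i)),
      pow_nonneg (le_of_lt hq0) (d / 2)]
  -- cardinality lower bound
  have hcard : ((q : ℝ) ^ (d - 1)) ≤ 2 * ((quadSurf (F := F) a).card : ℝ) := by
    have hs0 : (∑ x : Fin d → F, χ ((0:F) * (∑ i, a i * x i ^ 2) + ∑ i, (0:F) * x i))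
        = ((q : ℂ) ^ d) := by
      have : ∀ x : Fin d → F, (0:F) * (∑ i, a i * x i ^ 2) + ∑ i, (0:F) * x i = 0 := by
        intro x; simp
      simp_rw [this, AddChar.map_zero_eq_one]
      rw [Finset.sum_const, Finset.card_univ, Fintype.card_fun, ← hqdef]
      simp
    have hsum0 : ∀ x : Fin d → F, (∑ i, (0:F) * x i) = 0 := by intro x; simp
    have hQ0 : (∑ x ∈ quadSurf a, χ (∑ i, (0:F) * x i)) = ((quadSurf (F := F) a).card : ℂ) := by
      rw [Finset.sum_congr rfl fun x _ => by rw [hsum0 x, AddChar.map_zero_eq_one]]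
      simp
    have heq := hsplit 0
    simp only [Pi.zero_apply] at heq
    rw [hQ0, hs0] at heq
    -- (q:ℂ) * card = q^d + T, |T| ≤ (q-1) q^{d/2}
    have hT : ‖(q : ℂ) * ((quadSurf (F := F) a).card : ℂ) - (q : ℂ) ^ d‖
        ≤ ((q : ℝ) - 1) * (q : ℝ) ^ (d / 2) := by
      rw [heq]
      rw [add_sub_cancel_left]
      exact habsP 0
    set c : ℝ := ((quadSurf (F := F) a).card : ℝ) with hc
    have hreal : ‖(q : ℂ) * ((quadSurf (F := F) a).card : ℂ) - (q : ℂ) ^ d‖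
        = |(q : ℝ) * c - (q : ℝ) ^ d| := by
      rw [show ((q : ℂ) * ((quadSurf (F := F) a).card : ℂ) - (q : ℂ) ^ d)
          = (((q : ℝ) * c - (q : ℝ) ^ d : ℝ) : ℂ) by push_cast [hc]; ring]
      rw [Complex.norm_real, Real.norm_eq_abs]
    rw [hreal] at hT
    have hub : ((q : ℝ) - 1) * (q : ℝ) ^ (d / 2) ≤ (q : ℝ) ^ (d - 1) := by
      have h1 : ((q : ℝ) - 1) * (q : ℝ) ^ (d / 2) ≤ (q : ℝ) * (q : ℝ) ^ (d / 2) := by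
        have : (0:ℝ) ≤ (q : ℝ) ^ (d / 2) := by positivity
        nlinarith
      have h2 : (q : ℝ) * (q : ℝ) ^ (d / 2) = (q : ℝ) ^ (d / 2 + 1) := by
        rw [pow_succ]; ring
      have h3 : (q : ℝ) ^ (d / 2 + 1) ≤ (q : ℝ) ^ (d - 1) := by
        apply pow_le_pow_right₀ (by exact_mod_cast hq1.le)
        omega
      linarith
    have habs := abs_le.mp hT
    have hqd : (q : ℝ) ^ d = (q : ℝ) * (q : ℝ) ^ (d - 1) := by
      rw [← pow_succ']
      congr 1
      omega
    have hqd1 : (q : ℝ) ^ (d - 1) = (q : ℝ) * (q : ℝ) ^ (d - 2) := by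
      rw [← pow_succ']
      congr 1
      omega
    -- q*c ≥ q^d - q^{d-1}  ⇒ c ≥ q^{d-1} - q^{d-2} ⇒ 2c ≥ q^{d-1}
    have hge : (q : ℝ) * c ≥ (q : ℝ) ^ d - (q : ℝ) ^ (d - 1) := by linarith [habs.1]
    have hpow2 : (q : ℝ) ^ (d - 2) * 3 ≤ (q : ℝ) ^ (d - 1) := by
      have : (3:ℝ) ≤ (q:ℝ) := by exact_mod_cast hq3
      nlinarith [pow_nonneg (le_of_lt hq0) (d - 2)]
    nlinarith [hge]
  refine ⟨by nlinarith [pow_nonneg (le_of_lt hq0) (d / 2)], ?_⟩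
  -- second bound
  have hcpos : (0 : ℝ) < ((quadSurf (F := F) a).card : ℝ) := by
    have : (0:ℝ) < (q : ℝ) ^ (d - 1) := by positivity
    linarith
  set c : ℝ := ((quadSurf (F := F) a).card : ℝ) with hc
  have habs_sigma : ‖sigmaInv χ a m‖
      = c⁻¹ * ‖∑ x ∈ quadSurf a, χ (∑ i, m i * x i)‖ := by
    rw [sigmaInv, norm_mul, norm_inv, Complex.norm_natCast]
  rw [habs_sigma]
  -- rpow computation
  obtain ⟨k, hk⟩ := hd2
  have hdk : d = 2 * k := by omega
  have hk2 : 2 ≤ k := by omega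
  have hrpow : (q : ℝ) ^ (-(((d : ℝ) - 2) / 2)) = ((q : ℝ) ^ (k - 1))⁻¹ := by
    have h1 : (-(((d : ℝ) - 2) / 2)) = -((k - 1 : ℕ) : ℝ) := by
      push_cast [hdk, Nat.cast_sub (by omega : 1 ≤ k)]
      ring
    rw [h1, Real.rpow_neg (le_of_lt hq0), Real.rpow_natCast]
  rw [hrpow]
  have hd2k : d / 2 = k := by omega
  calc c⁻¹ * ‖∑ x ∈ quadSurf a, χ (∑ i, m i * x i)‖
      ≤ c⁻¹ * (q : ℝ) ^ k := by
        apply mul_le_mul_of_nonneg_left _ (by positivity)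
        rw [← hd2k]; exact hmain
    _ ≤ 2 * ((q : ℝ) ^ (k - 1))⁻¹ := by
        have h2 : (0 : ℝ) < (q : ℝ) ^ (k - 1) := by positivity
        rw [inv_mul_eq_div, div_le_iff₀ hcpos,
          show (2 : ℝ) * ((q : ℝ) ^ (k - 1))⁻¹ * c = (2 * c) / (q : ℝ) ^ (k - 1) by ring,
          le_div_iff₀ h2]
        calc (q : ℝ) ^ k * (q : ℝ) ^ (k - 1) = (q : ℝ) ^ (d - 1) := by
              rw [← pow_add]
              congr 1
              omega
          _ ≤ 2 * c := hcard
end
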